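/- arXiv:2405.15010 — 9 statements merged into one kernel-verified Lean document; each statement's English description precedes it below -/
import Mathlib

section
/- Let f : ℝ^d → ℝ be differentiable, convex, and (L0, L1)-smooth with L0 > 0, L1 > 0, and suppose f attains its minimum at x* with f* = f(x*). Then for every x ∈ ℝ^d, ‖∇f(x)‖² / (2(L0 + L1‖∇f(x)‖)) ≤ f(x) − f*. -/
theorem descent {d : ℕ}
    (f : EuclideanSpace ℝ (Fin d) → ℝ) (L0 L1 : ℝ)
    (hL1 : 0 < L1)
    (hdiff : Differentiable ℝ f)
    (hsmooth : ∀ x y : EuclideanSpace ℝ (Fin d), ‖x - y‖ ≤ 1 / L1 →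
      ‖gradient f x - gradient f y‖ ≤ (L0 + L1 * ‖gradient f x‖) * ‖x - y‖)
    (x v : EuclideanSpace ℝ (Fin d)) (hv : ‖v‖ ≤ 1 / L1) :
    f (x + v) ≤ f x + inner ℝ (gradient f x) v
      + (L0 + L1 * ‖gradient f x‖) / 2 * ‖v‖ ^ 2 := by
  set g := gradient f x with hg
  set L := L0 + L1 * ‖g‖ with hLdef
  set φ : ℝ → ℝ := fun s => f (x + s • v) - s * inner ℝ g v - L * ‖v‖ ^ 2 * s ^ 2 / 2 with hφ
  have hderiv : ∀ s : ℝ, HasDerivAt φ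
      (inner ℝ (gradient f (x + s • v)) v - inner ℝ g v - L * ‖v‖ ^ 2 * s) s := by
    intro s
    have h1 : HasDerivAt (fun s : ℝ => x + s • v) v s := by
      simpa using ((hasDerivAt_id s).smul_const v).const_add x
    have h2 : HasDerivAt (fun s : ℝ => f (x + s • v))
        (inner ℝ (gradient f (x + s • v)) v) s := by
      have := ((hdiff (x + s • v)).hasGradientAt.hasFDerivAt).comp_hasDerivAt s h1
      simp at this ⊢
      exact this
    have h3 : HasDerivAt (fun s : ℝ => s * inner ℝ g v) (inner ℝ g v : ℝ) s := by
      simpa using (hasDerivAt_id s).mul_const (inner ℝ g v : ℝ)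
    have h4 : HasDerivAt (fun s : ℝ => L * ‖v‖ ^ 2 * s ^ 2 / 2) (L * ‖v‖ ^ 2 * s) s := by
      have := ((hasDerivAt_pow 2 s).const_mul (L * ‖v‖ ^ 2)).div_const 2
      exact this.congr_deriv (by norm_num; ring)
    exact (h2.sub h3).sub h4
  have hanti : AntitoneOn φ (Set.Icc 0 1) := by
    apply antitoneOn_of_deriv_nonpos (convex_Icc 0 1)
    · exact fun s hs => (hderiv s).continuousAt.continuousWithinAt
    · exact fun s hs => (hderiv s).differentiableAt.differentiableWithinAt
    · intro s hs
      rw [interior_Icc] at hs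
      rw [(hderiv s).deriv]
      have hz : ‖x - (x + s • v)‖ = s * ‖v‖ := by
        rw [show x - (x + s • v) = -(s • v) by abel, norm_neg, norm_smul,
          Real.norm_eq_abs, abs_of_pos hs.1]
      have hle : ‖x - (x + s • v)‖ ≤ 1 / L1 := by
        rw [hz]
        calc s * ‖v‖ ≤ 1 * ‖v‖ := by
              apply mul_le_mul_of_nonneg_right hs.2.le (norm_nonneg v)
          _ = ‖v‖ := one_mul _
          _ ≤ 1 / L1 := hv
      have hsm := hsmooth x (x + s • v) hle
      rw [hz] at hsm
      have key : inner ℝ (gradient f (x + s • v)) v - inner ℝ g v ≤ L * ‖v‖ ^ 2 * s := by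
        calc inner ℝ (gradient f (x + s • v)) v - inner ℝ g v
            = inner ℝ (gradient f (x + s • v) - g) v := by
              rw [inner_sub_left]
          _ ≤ ‖gradient f (x + s • v) - g‖ * ‖v‖ := real_inner_le_norm _ _
          _ = ‖g - gradient f (x + s • v)‖ * ‖v‖ := by rw [norm_sub_rev]
          _ ≤ (L * (s * ‖v‖)) * ‖v‖ := by
              exact mul_le_mul_of_nonneg_right hsm (norm_nonneg v)
          _ = L * ‖v‖ ^ 2 * s := by ring
      linarith
  have := hanti (Set.left_mem_Icc.mpr zero_le_one) (Set.right_mem_Icc.mpr zero_le_one)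
    zero_le_one
  simp only [hφ, one_smul, zero_smul, add_zero, one_mul, zero_mul] at this
  nlinarith [this]

/-- For a differentiable, convex, (L0, L1)-smooth function attaining its
minimum at `xstar`, every `x` satisfies
`‖∇f(x)‖² / (2(L0 + L1‖∇f(x)‖)) ≤ f(x) − f(xstar)`. -/
theorem polyak_lower_bound_generalized_smooth {d : ℕ}
    (f : EuclideanSpace ℝ (Fin d) → ℝ) (L0 L1 : ℝ)
    (hL0 : 0 < L0) (hL1 : 0 < L1)
    (hdiff : Differentiable ℝ f)
    (hconv : ConvexOn ℝ Set.univ f)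
    (hsmooth : ∀ x y : EuclideanSpace ℝ (Fin d), ‖x - y‖ ≤ 1 / L1 →
      ‖gradient f x - gradient f y‖ ≤ (L0 + L1 * ‖gradient f x‖) * ‖x - y‖)
    (xstar : EuclideanSpace ℝ (Fin d)) (hmin : ∀ y, f xstar ≤ f y)
    (x : EuclideanSpace ℝ (Fin d)) :
    ‖gradient f x‖ ^ 2 / (2 * (L0 + L1 * ‖gradient f x‖)) ≤ f x - f xstar := by
  set g := gradient f x with hg
  set L := L0 + L1 * ‖g‖ with hLdef
  have hLpos : 0 < L := by positivity
  set v : EuclideanSpace ℝ (Fin d) := -((1 / L) • g) with hv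
  have hnv : ‖v‖ = ‖g‖ / L := by
    rw [hv, norm_neg, norm_smul, Real.norm_eq_abs, abs_of_pos (by positivity : (0:ℝ) < 1/L)]
    ring
  have hvle : ‖v‖ ≤ 1 / L1 := by
    rw [hnv, div_le_div_iff₀ hLpos hL1]
    have : L1 * ‖g‖ ≤ L := by rw [hLdef]; linarith
    nlinarith [norm_nonneg g]
  have hd := descent f L0 L1 hL1 hdiff hsmooth x v hvle
  have hinner : (inner ℝ g v : ℝ) = -(‖g‖ ^ 2 / L) := by
    rw [hv, inner_neg_right, real_inner_smul_right, real_inner_self_eq_norm_sq]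
    ring
  have hmin' := hmin (x + v)
  rw [hinner, hnv] at hd
  have h1 : f xstar ≤ f x - ‖g‖ ^ 2 / (2 * L) := by
    have : f x + -(‖g‖ ^ 2 / L) + L / 2 * (‖g‖ / L) ^ 2 = f x - ‖g‖ ^ 2 / (2 * L) := by
      field_simp
      ring
    rw [this] at hd
    linarith
  linarith
end

section
/- Let f : ℝ^d → ℝ be differentiable, convex, and (L0, L1)-smooth with L0 > 0, L1 > 0, and suppose f attains its minimum at x* with f* = f(x*). Then for every x ∈ ℝ^d with ∇f(x) ≠ 0, min{ 1/(4 L0), 1/(4 L1 ‖∇f(x)‖) } ≤ (f(x) − f*) / ‖∇f(x)‖². -/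
set_option maxHeartbeats 1000000 in
/-- Lower bound on the Polyak stepsize under (L0, L1)-smoothness:
`min{1/(4L0), 1/(4L1‖∇f(x)‖)} ≤ (f(x) − f*)/‖∇f(x)‖²`. -/
theorem polyak_stepsize_lower_bound_generalized_smooth {d : ℕ}
    (f : EuclideanSpace ℝ (Fin d) → ℝ) (L0 L1 : ℝ)
    (hL0 : 0 < L0) (hL1 : 0 < L1)
    (hdiff : Differentiable ℝ f)
    (hconv : ConvexOn ℝ Set.univ f)
    (hsmooth : ∀ x y : EuclideanSpace ℝ (Fin d), ‖x - y‖ ≤ 1 / L1 →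
      ‖gradient f x - gradient f y‖ ≤ (L0 + L1 * ‖gradient f x‖) * ‖x - y‖)
    (xstar : EuclideanSpace ℝ (Fin d)) (hmin : ∀ y, f xstar ≤ f y)
    (x : EuclideanSpace ℝ (Fin d)) (hgrad : gradient f x ≠ 0) :
    min (1 / (4 * L0)) (1 / (4 * L1 * ‖gradient f x‖)) ≤
      (f x - f xstar) / ‖gradient f x‖ ^ 2 := by
  set g := gradient f x with hg
  set G := ‖g‖ with hG
  have hGpos : 0 < G := norm_pos_iff.mpr hgrad
  set m := min (1 / (4 * L0)) (1 / (4 * L1 * G)) with hm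
  have hmpos : 0 < m := lt_min (by positivity) (by positivity)
  set t := 2 * m with ht
  have htpos : 0 < t := by positivity
  set L := L0 + L1 * G with hL
  have hLpos : 0 < L := by positivity
  -- t * L ≤ 1
  have htL : t * L ≤ 1 := by
    have h1 : m ≤ 1 / (4 * L0) := min_le_left _ _
    have h2 : m ≤ 1 / (4 * L1 * G) := min_le_right _ _
    have e1 : m * L0 ≤ 1 / 4 := by
      calc m * L0 ≤ (1 / (4 * L0)) * L0 := mul_le_mul_of_nonneg_right h1 hL0.le
        _ = 1 / 4 := by field_simp
    have e2 : m * (L1 * G) ≤ 1 / 4 := by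
      calc m * (L1 * G) ≤ (1 / (4 * L1 * G)) * (L1 * G) :=
          mul_le_mul_of_nonneg_right h2 (by positivity)
        _ = 1 / 4 := by field_simp
    nlinarith
  set v : EuclideanSpace ℝ (Fin d) := (-t) • g with hv
  have hvnorm : ‖v‖ = t * G := by
    rw [hv, norm_smul]; simp [abs_of_pos htpos, hG]
  have hvL1 : t * G ≤ 1 / L1 := by
    have h2 : m ≤ 1 / (4 * L1 * G) := min_le_right _ _
    have : t * G ≤ 2 * (1 / (4 * L1 * G)) * G := by nlinarith
    calc t * G ≤ 2 * (1 / (4 * L1 * G)) * G := this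
      _ = 1 / (2 * L1) := by field_simp; ring
      _ ≤ 1 / L1 := one_div_le_one_div_of_le hL1 (by linarith)
  -- gradient bound along the segment
  have hgradbd : ∀ s : ℝ, s ∈ Set.Icc (0:ℝ) 1 →
      ‖g - gradient f (x + s • v)‖ ≤ L * (s * ‖v‖) := by
    intro s hs
    have hxz : x - (x + s • v) = (-s) • v := by
      rw [neg_smul]; abel
    have hnorm : ‖x - (x + s • v)‖ = s * ‖v‖ := by
      rw [hxz, norm_smul]; simp [abs_of_nonneg hs.1]
    have hle : ‖x - (x + s • v)‖ ≤ 1 / L1 := by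
      rw [hnorm, hvnorm]
      calc s * (t * G) ≤ 1 * (t * G) := mul_le_mul_of_nonneg_right hs.2 (by positivity)
        _ = t * G := one_mul _
        _ ≤ 1 / L1 := hvL1
    have := hsmooth x (x + s • v) hle
    rw [hnorm] at this
    exact this
  -- derivative of φ
  have hc : ∀ s : ℝ, HasDerivAt (fun s : ℝ => x + s • v) v s := by
    intro s
    simpa using ((hasDerivAt_id s).smul_const v).const_add x
  have hphi : ∀ s : ℝ, HasDerivAt (fun s : ℝ => f (x + s • v))
      (inner ℝ (gradient f (x + s • v)) v : ℝ) s := by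
    intro s
    have h1 := ((hdiff (x + s • v)).hasGradientAt.hasFDerivAt).comp_hasDerivAt s (hc s)
    exact h1.congr_deriv (by simp [gradient, InnerProductSpace.toDual_apply_apply])
  -- ψ
  set ψ : ℝ → ℝ := fun s => f (x + s • v) - f x - s * (inner ℝ g v : ℝ) - L * ‖v‖ ^ 2 * s ^ 2 / 2
    with hψ
  have hψderiv : ∀ s : ℝ, HasDerivAt ψ
      ((inner ℝ (gradient f (x + s • v)) v : ℝ) - (inner ℝ g v : ℝ) - L * ‖v‖ ^ 2 * s) s := by
    intro s
    have h1 : HasDerivAt (fun s : ℝ => s * (inner ℝ g v : ℝ)) (inner ℝ g v : ℝ) s := by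
      simpa using (hasDerivAt_id s).mul_const (inner ℝ g v : ℝ)
    have h2 : HasDerivAt (fun s : ℝ => L * ‖v‖ ^ 2 * s ^ 2 / 2) (L * ‖v‖ ^ 2 * s) s := by
      have := (hasDerivAt_pow 2 s).const_mul (L * ‖v‖ ^ 2)
      have := this.div_const 2
      exact this.congr_deriv (by rw [show (2:ℕ) - 1 = 1 from rfl]; push_cast; ring)
    exact (((hphi s).sub_const (f x)).sub h1).sub h2
  have hψnonpos : ∀ s ∈ Set.Icc (0:ℝ) 1,
      (inner ℝ (gradient f (x + s • v)) v : ℝ) - (inner ℝ g v : ℝ) - L * ‖v‖ ^ 2 * s ≤ 0 := by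
    intro s hs
    have h1 : (inner ℝ (gradient f (x + s • v)) v : ℝ) - (inner ℝ g v : ℝ)
        = inner ℝ (gradient f (x + s • v) - g) v := by
      rw [inner_sub_left]
    rw [h1]
    have h2 : (inner ℝ (gradient f (x + s • v) - g) v : ℝ) ≤ ‖gradient f (x + s • v) - g‖ * ‖v‖ :=
      real_inner_le_norm _ _
    have h3 : ‖gradient f (x + s • v) - g‖ ≤ L * (s * ‖v‖) := by
      rw [← norm_neg]; simpa [neg_sub] using hgradbd s hs
    have h4 : ‖gradient f (x + s • v) - g‖ * ‖v‖ ≤ L * (s * ‖v‖) * ‖v‖ := by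
      apply mul_le_mul_of_nonneg_right h3 (norm_nonneg _)
    nlinarith [norm_nonneg v]
  -- ψ antitone on [0,1]
  have hanti : AntitoneOn ψ (Set.Icc (0:ℝ) 1) := by
    apply antitoneOn_of_deriv_nonpos (convex_Icc 0 1)
    · exact fun s _ => ((hψderiv s).continuousAt).continuousWithinAt
    · exact fun s _ => ((hψderiv s).differentiableAt).differentiableWithinAt
    · intro s hs
      rw [(hψderiv s).deriv]
      exact hψnonpos s (Set.mem_of_mem_of_subset hs
        (interior_subset.trans (by norm_num)))
  have hψ1 : ψ 1 ≤ ψ 0 := hanti (by norm_num) (by norm_num) zero_le_one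
  have hψ0 : ψ 0 = 0 := by simp [hψ]
  -- unfold ψ 1
  have hdescent : f (x + v) ≤ f x + (inner ℝ g v : ℝ) + L * ‖v‖ ^ 2 / 2 := by
    have := hψ1
    rw [hψ0] at this
    simp only [hψ, one_smul, one_pow, mul_one, one_mul] at this
    linarith
  have hinner : (inner ℝ g v : ℝ) = -t * G ^ 2 := by
    rw [hv, real_inner_smul_right, real_inner_self_eq_norm_sq]
  have hstarle : f xstar ≤ f (x + v) := hmin _
  have key : m * G ^ 2 ≤ f x - f xstar := by
    have h1 : f x - f xstar ≥ f x - f (x + v) := by linarith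
    have h2 : f x - f (x + v) ≥ t * G ^ 2 - L * (t * G) ^ 2 / 2 := by
      have := hdescent
      rw [hinner, hvnorm] at this
      nlinarith
    have h3 : L * (t * G) ^ 2 / 2 ≤ t * G ^ 2 / 2 := by
      have h := mul_le_mul_of_nonneg_right htL (by positivity : (0:ℝ) ≤ t * G ^ 2)
      nlinarith [h]
    have : t * G ^ 2 / 2 = m * G ^ 2 := by rw [ht]; ring
    linarith
  rw [le_div_iff₀ (by positivity)]
  linarith
end

section
/- Let f : ℝ^d → ℝ be differentiable, convex, and (L0, L1)-smooth with L0 > 0, L1 > 0, and suppose f attains its minimum at x* with f* = f(x*). Let x_t ∈ ℝ^d satisfy ∇f(x_t) ≠ 0 and ‖∇f(x_t)‖ ≤ L0/L1, and let x_{t+1} = x_t − η_t ∇f(x_t) with Polyak stepsize η_t = (f(x_t) − f*)/‖∇f(x_t)‖². Then ‖x_{t+1} − x*‖² ≤ ‖x_t − x*‖² − (f(x_t) − f*)/(4 L0). -/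
set_option maxHeartbeats 800000

open InnerProductSpace Set

local notation "⟪" x ", " y "⟫" => @inner ℝ _ _ x y

variable {d : ℕ}

private lemma lineDeriv_aux (f : EuclideanSpace ℝ (Fin d) → ℝ) (hdiff : Differentiable ℝ f)
    (x v : EuclideanSpace ℝ (Fin d)) (t : ℝ) :
    HasDerivAt (fun s : ℝ => f (x + s • v)) ⟪gradient f (x + t • v), v⟫ t := by
  have h2 : HasDerivAt (fun s : ℝ => x + s • v) v t := by
    simpa using ((hasDerivAt_id t).smul_const v).const_add x
  have h1 := (hdiff (x + t • v)).hasGradientAt.hasFDerivAt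
  have h3 := h1.comp_hasDerivAt t h2
  simpa [Function.comp_def, InnerProductSpace.toDual_apply_apply] using h3

private lemma grad_ineq (f : EuclideanSpace ℝ (Fin d) → ℝ) (hdiff : Differentiable ℝ f)
    (hconv : ConvexOn ℝ Set.univ f) (x y : EuclideanSpace ℝ (Fin d)) :
    ⟪gradient f x, y - x⟫ ≤ f y - f x := by
  have hφc : ConvexOn ℝ Set.univ (fun t : ℝ => f (x + t • (y - x))) := by
    have h := hconv.comp_affineMap (AffineMap.lineMap x y)
    have : (fun t : ℝ => f (x + t • (y - x))) = (f ∘ AffineMap.lineMap x y) := by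
      funext t
      simp only [Function.comp_apply, AffineMap.lineMap_apply_module]
      congr 1
      module
    rw [this]
    simpa using h
  have hφd := lineDeriv_aux f hdiff x (y - x) 0
  have h0 : x + (0:ℝ) • (y - x) = x := by simp
  rw [h0] at hφd
  have := hφc.le_slope_of_hasDerivAt (Set.mem_univ (0:ℝ)) (Set.mem_univ (1:ℝ)) one_pos hφd
  simpa [slope_def_field] using this

private lemma grad_cont (f : EuclideanSpace ℝ (Fin d) → ℝ) (L0 L1 : ℝ)
    (hL0 : 0 < L0) (hL1 : 0 < L1)
    (hsmooth : ∀ x y : EuclideanSpace ℝ (Fin d), ‖x - y‖ ≤ 1 / L1 →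
      ‖gradient f x - gradient f y‖ ≤ (L0 + L1 * ‖gradient f x‖) * ‖x - y‖) :
    Continuous (gradient f) := by
  rw [continuous_iff_continuousAt]
  intro u
  rw [Metric.continuousAt_iff]
  intro ε hε
  set C : ℝ := L0 + L1 * ‖gradient f u‖ + 1 with hCdef
  have hC : 0 < C := by positivity
  refine ⟨min (1 / L1) (ε / C), by positivity, fun {w} hw => ?_⟩
  have hw1 : ‖u - w‖ ≤ 1 / L1 := by
    have := lt_of_lt_of_le hw (min_le_left _ _)
    rw [dist_eq_norm] at this
    rw [← norm_neg]
    simpa [neg_sub] using this.le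
  have hw2 : ‖u - w‖ < ε / C := by
    have := lt_of_lt_of_le hw (min_le_right _ _)
    rw [dist_eq_norm] at this
    rw [← norm_neg]
    simpa [neg_sub] using this
  have h1 := hsmooth u w hw1
  rw [dist_eq_norm]
  have h2 : ‖gradient f w - gradient f u‖ = ‖gradient f u - gradient f w‖ := by
    rw [← norm_neg]; simp
  rw [h2]
  calc ‖gradient f u - gradient f w‖ ≤ (L0 + L1 * ‖gradient f u‖) * ‖u - w‖ := h1
    _ ≤ C * ‖u - w‖ := by
        apply mul_le_mul_of_nonneg_right _ (norm_nonneg _)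
        simp [hCdef]
    _ < C * (ε / C) := by
        apply mul_lt_mul_of_pos_left hw2 hC
    _ = ε := by field_simp

private lemma descent_lemma (f : EuclideanSpace ℝ (Fin d) → ℝ) (L0 L1 : ℝ)
    (hL0 : 0 < L0) (hL1 : 0 < L1) (hdiff : Differentiable ℝ f)
    (hsmooth : ∀ x y : EuclideanSpace ℝ (Fin d), ‖x - y‖ ≤ 1 / L1 →
      ‖gradient f x - gradient f y‖ ≤ (L0 + L1 * ‖gradient f x‖) * ‖x - y‖)
    (x v : EuclideanSpace ℝ (Fin d)) (hv : ‖v‖ ≤ 1 / L1) :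
    f (x + v) ≤ f x + ⟪gradient f x, v⟫ + (L0 + L1 * ‖gradient f x‖) / 2 * ‖v‖ ^ 2 := by
  set g := gradient f x with hg
  set L : ℝ := L0 + L1 * ‖g‖ with hLdef
  have hL : 0 ≤ L := by positivity
  have hcont : Continuous (fun t : ℝ => ⟪gradient f (x + t • v), v⟫) := by
    apply Continuous.inner
    · exact (grad_cont f L0 L1 hL0 hL1 hsmooth).comp
        (continuous_const.add (continuous_id.smul continuous_const))
    · exact continuous_const
  have key : ∫ t in (0:ℝ)..1, ⟪gradient f (x + t • v), v⟫ = f (x + v) - f x := by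
    have := intervalIntegral.integral_eq_sub_of_hasDerivAt
      (f := fun s : ℝ => f (x + s • v))
      (f' := fun t : ℝ => ⟪gradient f (x + t • v), v⟫)
      (fun t _ => lineDeriv_aux f hdiff x v t)
      (hcont.intervalIntegrable 0 1)
    simpa using this
  have hbound : ∀ t ∈ Set.Icc (0:ℝ) 1,
      ⟪gradient f (x + t • v), v⟫ ≤ ⟪g, v⟫ + L * ‖v‖ ^ 2 * t := by
    intro t ht
    have htv : ‖x - (x + t • v)‖ ≤ 1 / L1 := by
      have : ‖x - (x + t • v)‖ = |t| * ‖v‖ := by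
        rw [show x - (x + t • v) = -(t • v) by abel, norm_neg, norm_smul, Real.norm_eq_abs]
      rw [this, abs_of_nonneg ht.1]
      calc t * ‖v‖ ≤ 1 * ‖v‖ := by
            apply mul_le_mul_of_nonneg_right ht.2 (norm_nonneg _)
        _ ≤ 1 / L1 := by simpa using hv
    have hs := hsmooth x (x + t • v) htv
    have hnorm : ‖x - (x + t • v)‖ = t * ‖v‖ := by
      rw [show x - (x + t • v) = -(t • v) by abel, norm_neg, norm_smul, Real.norm_eq_abs,
        abs_of_nonneg ht.1]
    rw [hnorm] at hs
    have h1 : ⟪gradient f (x + t • v) - g, v⟫ ≤ L * (t * ‖v‖) * ‖v‖ := by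
      calc ⟪gradient f (x + t • v) - g, v⟫ ≤ ‖gradient f (x + t • v) - g‖ * ‖v‖ :=
            real_inner_le_norm _ _
        _ ≤ L * (t * ‖v‖) * ‖v‖ := by
            apply mul_le_mul_of_nonneg_right _ (norm_nonneg _)
            rw [← norm_neg]
            simpa [neg_sub, hg] using hs
    have h2 : ⟪gradient f (x + t • v), v⟫ = ⟪g, v⟫ + ⟪gradient f (x + t • v) - g, v⟫ := by
      rw [inner_sub_left]; ring
    rw [h2]
    nlinarith [h1]
  have hint2 : IntervalIntegrable (fun t : ℝ => ⟪g, v⟫ + L * ‖v‖ ^ 2 * t) MeasureTheory.volume 0 1 :=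
    (Continuous.intervalIntegrable (continuous_const.add (continuous_const.mul continuous_id)) 0 1)
  have hmono := intervalIntegral.integral_mono_on (a := (0:ℝ)) (b := 1) zero_le_one
    (hcont.intervalIntegrable 0 1) hint2 hbound
  have hcomp : ∫ t in (0:ℝ)..1, (⟪g, v⟫ + L * ‖v‖ ^ 2 * t) = ⟪g, v⟫ + L * ‖v‖ ^ 2 / 2 := by
    rw [intervalIntegral.integral_add (f := fun _ => ⟪g, v⟫) (g := fun t => L * ‖v‖ ^ 2 * t) (intervalIntegrable_const)
      ((Continuous.intervalIntegrable (continuous_const.mul continuous_id : Continuous fun t : ℝ => L * ‖v‖ ^ 2 * t) 0 1)),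
      intervalIntegral.integral_const_mul, integral_id]
    simp
    ring
  rw [key, hcomp] at hmono
  nlinarith [hmono]

private lemma gap_lower (f : EuclideanSpace ℝ (Fin d) → ℝ) (L0 L1 : ℝ)
    (hL0 : 0 < L0) (hL1 : 0 < L1) (hdiff : Differentiable ℝ f)
    (hsmooth : ∀ x y : EuclideanSpace ℝ (Fin d), ‖x - y‖ ≤ 1 / L1 →
      ‖gradient f x - gradient f y‖ ≤ (L0 + L1 * ‖gradient f x‖) * ‖x - y‖)
    (xstar : EuclideanSpace ℝ (Fin d)) (hmin : ∀ y, f xstar ≤ f y)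
    (x : EuclideanSpace ℝ (Fin d)) (hsmall : ‖gradient f x‖ ≤ L0 / L1) :
    ‖gradient f x‖ ^ 2 / (4 * L0) ≤ f x - f xstar := by
  set g := gradient f x with hgdef
  set c : ℝ := ‖g‖ ^ 2 with hc
  set v : EuclideanSpace ℝ (Fin d) := -(1 / (2 * L0)) • g with hvdef
  have hL1g : L1 * ‖g‖ ≤ L0 := by
    rw [div_eq_mul_inv] at hsmall
    calc L1 * ‖g‖ ≤ L1 * (L0 * L1⁻¹) := by
          apply mul_le_mul_of_nonneg_left hsmall hL1.le
      _ = L0 := by field_simp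
  have hnv : ‖v‖ = ‖g‖ / (2 * L0) := by
    rw [hvdef, norm_smul, Real.norm_eq_abs, abs_neg, abs_of_nonneg (by positivity)]
    ring
  have hv : ‖v‖ ≤ 1 / L1 := by
    rw [hnv]
    rw [div_le_div_iff₀ (by positivity) hL1]
    nlinarith [hL1g]
  have hd := descent_lemma f L0 L1 hL0 hL1 hdiff hsmooth x v hv
  have hinner : ⟪g, v⟫ = -(1 / (2 * L0)) * c := by
    rw [hvdef, real_inner_smul_right, real_inner_self_eq_norm_sq, hc]
  have hv2 : ‖v‖ ^ 2 = c / (4 * L0 ^ 2) := by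
    rw [hnv, hc, div_pow]; ring
  rw [hinner, hv2] at hd
  have hmin' := hmin (x + v)
  have h3 : (L0 + L1 * ‖g‖) / 2 * (c / (4 * L0 ^ 2)) ≤ (2 * L0) / 2 * (c / (4 * L0 ^ 2)) := by
    apply mul_le_mul_of_nonneg_right (by linarith) (by positivity)
  have h4 : (2 * L0) / 2 * (c / (4 * L0 ^ 2)) = c / (4 * L0) := by
    field_simp
  have h5 : 1 / (2 * L0) * c = 2 * (c / (4 * L0)) := by
    field_simp; ring
  nlinarith [hd, hmin', h3, h4, h5]

/-- One step of gradient descent with Polyak stepsize, in the small-gradient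
regime `‖∇f(x_t)‖ ≤ L0/L1`, decreases the squared distance to the optimum by at least
`(f(x_t) − f*)/(4L0)`. -/
theorem polyak_step_small_gradient_case {d : ℕ}
    (f : EuclideanSpace ℝ (Fin d) → ℝ) (L0 L1 : ℝ)
    (hL0 : 0 < L0) (hL1 : 0 < L1)
    (hdiff : Differentiable ℝ f)
    (hconv : ConvexOn ℝ Set.univ f)
    (hsmooth : ∀ x y : EuclideanSpace ℝ (Fin d), ‖x - y‖ ≤ 1 / L1 →
      ‖gradient f x - gradient f y‖ ≤ (L0 + L1 * ‖gradient f x‖) * ‖x - y‖)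
    (xstar : EuclideanSpace ℝ (Fin d)) (hmin : ∀ y, f xstar ≤ f y)
    (xt xt1 : EuclideanSpace ℝ (Fin d))
    (hgrad : gradient f xt ≠ 0)
    (hsmall : ‖gradient f xt‖ ≤ L0 / L1)
    (η : ℝ) (hη : η = (f xt - f xstar) / ‖gradient f xt‖ ^ 2)
    (hstep : xt1 = xt - η • gradient f xt) :
    ‖xt1 - xstar‖ ^ 2 ≤ ‖xt - xstar‖ ^ 2 - (f xt - f xstar) / (4 * L0) := by
  set g := gradient f xt with hgdef
  set G : ℝ := ‖g‖ ^ 2 with hGdef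
  set e : ℝ := f xt - f xstar with hedef
  have hG : 0 < G := by
    have : 0 < ‖g‖ := norm_pos_iff.mpr hgrad
    positivity
  have hgap : G / (4 * L0) ≤ e := gap_lower f L0 L1 hL0 hL1 hdiff hsmooth xstar hmin xt hsmall
  have he : 0 < e := lt_of_lt_of_le (by positivity) hgap
  have hη0 : 0 < η := by rw [hη]; positivity
  have hconv' := grad_ineq f hdiff hconv xt xstar
  have hinner : e ≤ ⟪g, xt - xstar⟫ := by
    rw [show xstar - xt = -(xt - xstar) by abel, inner_neg_right] at hconv'
    rw [hedef]
    linarith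
  have hexp : ‖xt1 - xstar‖ ^ 2
      = ‖xt - xstar‖ ^ 2 - 2 * (η * ⟪xt - xstar, g⟫) + η ^ 2 * G := by
    rw [hstep, show xt - η • g - xstar = (xt - xstar) - η • g by abel, norm_sub_sq_real,
      real_inner_smul_right, norm_smul]
    rw [hGdef]
    simp [Real.norm_eq_abs, mul_pow, sq_abs]
  have hcomm : ⟪xt - xstar, g⟫ = ⟪g, xt - xstar⟫ := real_inner_comm _ _
  have step1 : ‖xt1 - xstar‖ ^ 2 ≤ ‖xt - xstar‖ ^ 2 - 2 * η * e + η ^ 2 * G := by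
    rw [hexp, hcomm]
    nlinarith [mul_le_mul_of_nonneg_left hinner hη0.le]
  have hηG : η = e / G := hη
  have h2 : ‖xt - xstar‖ ^ 2 - 2 * η * e + η ^ 2 * G = ‖xt - xstar‖ ^ 2 - e ^ 2 / G := by
    rw [hηG]; field_simp; ring
  have hG4 : G ≤ 4 * L0 * e := by
    rw [div_le_iff₀ (by positivity)] at hgap; linarith
  have h3 : e / (4 * L0) ≤ e ^ 2 / G := by
    rw [div_le_div_iff₀ (by positivity) hG]
    nlinarith [mul_le_mul_of_nonneg_left hG4 he.le]
  calc ‖xt1 - xstar‖ ^ 2 ≤ ‖xt - xstar‖ ^ 2 - 2 * η * e + η ^ 2 * G := step1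
    _ = ‖xt - xstar‖ ^ 2 - e ^ 2 / G := h2
    _ ≤ ‖xt - xstar‖ ^ 2 - e / (4 * L0) := by linarith [h3]
end

section
/- Let f : ℝ^d → ℝ be differentiable, convex, L-smooth with L > 0, and (L0, L1)-smooth with L0 > 0, L1 > 0, and suppose f attains its minimum at x* with f* = f(x*). Let x_t ∈ ℝ^d satisfy ‖∇f(x_t)‖ > L0/L1, and let x_{t+1} = x_t − η_t ∇f(x_t) with Polyak stepsize η_t = (f(x_t) − f*)/‖∇f(x_t)‖². Then ‖x_{t+1} − x*‖² ≤ ‖x_t − x*‖² − (1/(4 L1)) · √((f(x_t) − f*)/(2L)). -/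
open InnerProductSpace

variable {d : ℕ}

local notation "E" => EuclideanSpace ℝ (Fin d)

lemma grad_inner (f : E → ℝ) (hdiff : Differentiable ℝ f) (p v : E) :
    ⟪gradient f p, v⟫_ℝ = fderiv ℝ f p v := by
  rw [gradient, InnerProductSpace.toDual_symm_apply]

lemma line_hasDerivAt (f : E → ℝ) (hdiff : Differentiable ℝ f) (x v : E) (t : ℝ) :
    HasDerivAt (fun s : ℝ => f (x + s • v)) ⟪gradient f (x + t • v), v⟫_ℝ t := by
  have hc : HasDerivAt (fun s : ℝ => x + s • v) v t := by
    simpa using ((hasDerivAt_id t).smul_const v).const_add x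
  have := (hdiff (x + t • v)).hasFDerivAt.comp_hasDerivAt t hc
  rw [grad_inner f hdiff]
  exact this

lemma descent_lemma_s4 (f : E → ℝ) (hdiff : Differentiable ℝ f) (x v : E) (K : ℝ)
    (hK : 0 ≤ K)
    (hlip : ∀ t ∈ Set.Icc (0:ℝ) 1, ‖gradient f (x + t • v) - gradient f x‖ ≤ K * (t * ‖v‖)) :
    f (x + v) ≤ f x + ⟪gradient f x, v⟫_ℝ + K / 2 * ‖v‖ ^ 2 := by
  set ψ : ℝ → ℝ := fun t => f (x + t • v) - t * ⟪gradient f x, v⟫_ℝ - K * ‖v‖ ^ 2 * t ^ 2 / 2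
    with hψ
  have hψd : ∀ t : ℝ, HasDerivAt ψ
      (⟪gradient f (x + t • v) - gradient f x, v⟫_ℝ - K * ‖v‖ ^ 2 * t) t := by
    intro t
    have h1 := line_hasDerivAt f hdiff x v t
    have h2 : HasDerivAt (fun s : ℝ => s * ⟪gradient f x, v⟫_ℝ) ⟪gradient f x, v⟫_ℝ t := by
      simpa using (hasDerivAt_id t).mul_const _
    have h3 : HasDerivAt (fun s : ℝ => K * ‖v‖ ^ 2 * s ^ 2 / 2) (K * ‖v‖ ^ 2 * t) t := by
      have := ((hasDerivAt_pow 2 t).const_mul (K * ‖v‖ ^ 2)).div_const 2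
      refine this.congr_deriv ?_
      ring
    have h4 := (h1.sub h2).sub h3
    have : ⟪gradient f (x + t • v) - gradient f x, v⟫_ℝ - K * ‖v‖ ^ 2 * t
        = ⟪gradient f (x + t • v), v⟫_ℝ - ⟪gradient f x, v⟫_ℝ - K * ‖v‖ ^ 2 * t := by
      rw [inner_sub_left]
    rw [this]
    exact h4
  have hanti : AntitoneOn ψ (Set.Icc (0:ℝ) 1) := by
    apply antitoneOn_of_deriv_nonpos (convex_Icc 0 1)
    · exact fun t _ => ((hψd t).continuousAt).continuousWithinAt
    · exact fun t _ => ((hψd t).differentiableAt).differentiableWithinAt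
    · intro t ht
      rw [interior_Icc] at ht
      rw [(hψd t).deriv]
      have hb : ⟪gradient f (x + t • v) - gradient f x, v⟫_ℝ ≤ K * (t * ‖v‖) * ‖v‖ :=
        le_trans (real_inner_le_norm _ _)
          (mul_le_mul_of_nonneg_right (hlip t ⟨le_of_lt ht.1, le_of_lt ht.2⟩) (norm_nonneg v))
      nlinarith
  have h01 := hanti (Set.left_mem_Icc.2 one_pos.le) (Set.right_mem_Icc.2 one_pos.le) one_pos.le
  simp only [hψ, zero_smul, add_zero, one_smul, zero_mul, sub_zero] at h01
  nlinarith [h01]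

lemma convex_grad_ineq (f : E → ℝ) (hdiff : Differentiable ℝ f)
    (hconv : ConvexOn ℝ Set.univ f) (x y : E) :
    f x + ⟪gradient f x, y - x⟫_ℝ ≤ f y := by
  set φ : ℝ → ℝ := fun t => f (x + t • (y - x)) with hφ
  have hφc : ConvexOn ℝ Set.univ φ := by
    have : φ = f ∘ (AffineMap.lineMap x y) := by
      funext t
      simp [hφ, AffineMap.lineMap_apply]
      rw [add_comm]
    rw [this]
    have := hconv.comp_affineMap (AffineMap.lineMap x y)
    simpa using this
  have hd0 : HasDerivAt φ ⟪gradient f x, y - x⟫_ℝ 0 := by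
    have := line_hasDerivAt f hdiff x (y - x) 0
    simpa using this
  have hslope := hφc.deriv_le_slope (Set.mem_univ (0:ℝ)) (Set.mem_univ (1:ℝ)) one_pos
    (line_hasDerivAt f hdiff x (y - x) 0).differentiableAt
  rw [hd0.deriv] at hslope
  have : slope φ 0 1 = φ 1 - φ 0 := by simp [slope_def_field]
  rw [this] at hslope
  have h0 : φ 0 = f x := by simp [hφ]
  have h1 : φ 1 = f y := by simp [hφ]
  rw [h0, h1] at hslope
  linarith

set_option maxHeartbeats 1000000 in
/-- One step of gradient descent with Polyak stepsize, in the large-gradient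
regime `‖∇f(x_t)‖ > L0/L1`, decreases the squared distance to the optimum by at least
`(1/(4L1))·√((f(x_t) − f*)/(2L))`. -/
theorem polyak_step_large_gradient_case {d : ℕ}
    (f : EuclideanSpace ℝ (Fin d) → ℝ) (L L0 L1 : ℝ)
    (hL : 0 < L) (hL0 : 0 < L0) (hL1 : 0 < L1)
    (hdiff : Differentiable ℝ f)
    (hconv : ConvexOn ℝ Set.univ f)
    (hLsmooth : ∀ x y : EuclideanSpace ℝ (Fin d),
      ‖gradient f x - gradient f y‖ ≤ L * ‖x - y‖)
    (hsmooth : ∀ x y : EuclideanSpace ℝ (Fin d), ‖x - y‖ ≤ 1 / L1 →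
      ‖gradient f x - gradient f y‖ ≤ (L0 + L1 * ‖gradient f x‖) * ‖x - y‖)
    (xstar : EuclideanSpace ℝ (Fin d)) (hmin : ∀ y, f xstar ≤ f y)
    (xt xt1 : EuclideanSpace ℝ (Fin d))
    (hlarge : ‖gradient f xt‖ > L0 / L1)
    (η : ℝ) (hη : η = (f xt - f xstar) / ‖gradient f xt‖ ^ 2)
    (hstep : xt1 = xt - η • gradient f xt) :
    ‖xt1 - xstar‖ ^ 2 ≤ ‖xt - xstar‖ ^ 2 -
      (1 / (4 * L1)) * Real.sqrt ((f xt - f xstar) / (2 * L)) := by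
  set g := gradient f xt with hg
  have hn : 0 < ‖g‖ := lt_trans (div_pos hL0 hL1) hlarge
  have hΔ0 : 0 ≤ f xt - f xstar := sub_nonneg.2 (hmin xt)
  set Δ := f xt - f xstar with hΔ
  -- first bound : Δ ≥ ‖g‖²/(2L)
  have h1 : ‖g‖ ^ 2 / (2 * L) ≤ Δ := by
    have hlip : ∀ t ∈ Set.Icc (0:ℝ) 1,
        ‖gradient f (xt + t • (-(L⁻¹ • g))) - gradient f xt‖ ≤ L * (t * ‖-(L⁻¹ • g)‖) := by
      intro t ht
      have := hLsmooth (xt + t • (-(L⁻¹ • g))) xt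
      simpa [norm_smul, abs_of_nonneg ht.1] using this
    have hd := descent_lemma_s4 f hdiff xt (-(L⁻¹ • g)) L hL.le hlip
    have hiv : ⟪gradient f xt, -(L⁻¹ • g)⟫_ℝ = -(L⁻¹ * ‖g‖ ^ 2) := by
      rw [inner_neg_right, real_inner_smul_right, ← hg, real_inner_self_eq_norm_sq]
    have hvn : ‖-(L⁻¹ • g)‖ = L⁻¹ * ‖g‖ := by
      rw [norm_neg, norm_smul, Real.norm_eq_abs, abs_of_nonneg (inv_nonneg.2 hL.le)]
    rw [hiv, hvn] at hd
    have hstar := hmin (xt + -(L⁻¹ • g))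
    have hLne : L ≠ 0 := ne_of_gt hL
    rw [hΔ]
    have : f xstar ≤ f xt - ‖g‖ ^ 2 / (2 * L) := by
      calc f xstar ≤ f (xt + -(L⁻¹ • g)) := hstar
        _ ≤ f xt + -(L⁻¹ * ‖g‖ ^ 2) + L / 2 * (L⁻¹ * ‖g‖) ^ 2 := hd
        _ = f xt - ‖g‖ ^ 2 / (2 * L) := by field_simp; ring
    linarith
  -- second bound : Δ ≥ ‖g‖/(4L1)
  have h2 : ‖g‖ / (4 * L1) ≤ Δ := by
    set v : EuclideanSpace ℝ (Fin d) := -((1 / (2 * L1 * ‖g‖)) • g) with hv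
    have hvn : ‖v‖ = 1 / (2 * L1) := by
      rw [hv, norm_neg, norm_smul, Real.norm_eq_abs,
        abs_of_nonneg (by positivity : (0:ℝ) ≤ 1 / (2 * L1 * ‖g‖))]
      field_simp
    have hK : 0 ≤ L0 + L1 * ‖g‖ := by positivity
    have hlip : ∀ t ∈ Set.Icc (0:ℝ) 1,
        ‖gradient f (xt + t • v) - gradient f xt‖ ≤ (L0 + L1 * ‖g‖) * (t * ‖v‖) := by
      intro t ht
      have hdist : ‖xt - (xt + t • v)‖ ≤ 1 / L1 := by
        have : ‖xt - (xt + t • v)‖ = t * ‖v‖ := by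
          rw [show xt - (xt + t • v) = -(t • v) by abel, norm_neg, norm_smul,
            Real.norm_eq_abs, abs_of_nonneg ht.1]
        rw [this, hvn]
        calc t * (1 / (2 * L1)) ≤ 1 * (1 / (2 * L1)) := by
              apply mul_le_mul_of_nonneg_right ht.2; positivity
          _ ≤ 1 / L1 := by rw [one_mul]; apply div_le_div_of_nonneg_left <;> linarith
      have := hsmooth xt (xt + t • v) hdist
      rw [norm_sub_rev (gradient f xt)] at this
      have hdist2 : ‖xt - (xt + t • v)‖ = t * ‖v‖ := by
        rw [show xt - (xt + t • v) = -(t • v) by abel, norm_neg, norm_smul,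
          Real.norm_eq_abs, abs_of_nonneg ht.1]
      rw [hdist2] at this
      exact this
    have hd := descent_lemma_s4 f hdiff xt v (L0 + L1 * ‖g‖) hK hlip
    have hiv : ⟪gradient f xt, v⟫_ℝ = -(‖g‖ / (2 * L1)) := by
      rw [hv, inner_neg_right, real_inner_smul_right, ← hg, real_inner_self_eq_norm_sq]
      field_simp
    rw [hiv, hvn] at hd
    have hstar := hmin (xt + v)
    have hL0small : L0 < L1 * ‖g‖ := by
      rw [gt_iff_lt, div_lt_iff₀ hL1] at hlarge
      linarith [hlarge]
    have hb : (L0 + L1 * ‖g‖) / 2 * (1 / (2 * L1)) ^ 2 ≤ ‖g‖ / (4 * L1) := by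
      have he : (L0 + L1 * ‖g‖) / 2 * (1 / (2 * L1)) ^ 2 = (L0 + L1 * ‖g‖) / (8 * L1 ^ 2) := by
        field_simp
        ring
      rw [he, div_le_div_iff₀ (by positivity) (by positivity)]
      nlinarith [hL0small, hL1, hn]
    have hc : ‖g‖ / (2 * L1) - ‖g‖ / (4 * L1) = ‖g‖ / (4 * L1) := by
      field_simp
      ring
    rw [hΔ]
    linarith [hstar, hd, hb, hc]
  -- convexity
  have hcx : Δ ≤ ⟪xt - xstar, g⟫_ℝ := by
    have := convex_grad_ineq f hdiff hconv xt xstar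
    have h : ⟪g, xstar - xt⟫_ℝ = -⟪xt - xstar, g⟫_ℝ := by
      rw [real_inner_comm, show xstar - xt = -(xt - xstar) by abel, inner_neg_left]
    rw [← hg, h] at this
    rw [hΔ]
    linarith
  -- expansion
  have hexp : ‖xt1 - xstar‖ ^ 2 = ‖xt - xstar‖ ^ 2 - 2 * η * ⟪xt - xstar, g⟫_ℝ
      + η ^ 2 * ‖g‖ ^ 2 := by
    rw [hstep, show xt - η • g - xstar = (xt - xstar) - η • g by abel,
      norm_sub_sq_real, real_inner_smul_right, norm_smul, Real.norm_eq_abs,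
      mul_pow, sq_abs]
    ring
  have hη0 : 0 ≤ η := by
    rw [hη]; positivity
  have hkey : ‖xt1 - xstar‖ ^ 2 ≤ ‖xt - xstar‖ ^ 2 - Δ ^ 2 / ‖g‖ ^ 2 := by
    rw [hexp]
    have hη' : η = Δ / ‖g‖ ^ 2 := hη
    rw [hη']
    have hg2 : (0:ℝ) < ‖g‖ ^ 2 := by positivity
    have : 2 * (Δ / ‖g‖ ^ 2) * Δ ≤ 2 * (Δ / ‖g‖ ^ 2) * ⟪xt - xstar, g⟫_ℝ := by
      apply mul_le_mul_of_nonneg_left hcx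
      positivity
    have heq : (Δ / ‖g‖ ^ 2) ^ 2 * ‖g‖ ^ 2 = Δ ^ 2 / ‖g‖ ^ 2 := by
      field_simp
    rw [heq]
    have heq2 : 2 * (Δ / ‖g‖ ^ 2) * Δ = 2 * (Δ ^ 2 / ‖g‖ ^ 2) := by
      field_simp
    linarith [this, heq2 ▸ this]
  -- final arithmetic
  have hs2 : Real.sqrt (Δ / (2 * L)) ^ 2 = Δ / (2 * L) :=
    Real.sq_sqrt (by positivity)
  set s := Real.sqrt (Δ / (2 * L)) with hs
  have hs0 : 0 ≤ s := Real.sqrt_nonneg _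
  have hg2 : (0:ℝ) < ‖g‖ ^ 2 := by positivity
  have h1' : ‖g‖ ^ 2 ≤ Δ * (2 * L) := (div_le_iff₀ (by positivity)).mp h1
  have hD1 : s ^ 2 ≤ Δ ^ 2 / ‖g‖ ^ 2 := by
    rw [hs2]
    rw [div_le_div_iff₀ (by linarith) hg2]
    nlinarith [mul_le_mul_of_nonneg_left h1' hΔ0]
  have hD2 : (1 / (4 * L1)) ^ 2 ≤ Δ ^ 2 / ‖g‖ ^ 2 := by
    rw [le_div_iff₀ hg2]
    have : ‖g‖ / (4 * L1) * (‖g‖ / (4 * L1)) ≤ Δ * Δ :=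
      mul_le_mul h2 h2 (by positivity) (by linarith [h2, hn, hL1])
    calc (1 / (4 * L1)) ^ 2 * ‖g‖ ^ 2 = (‖g‖ / (4 * L1)) * (‖g‖ / (4 * L1)) := by ring
      _ ≤ Δ * Δ := this
      _ = Δ ^ 2 := by ring
  have hfin : (1 / (4 * L1)) * s ≤ Δ ^ 2 / ‖g‖ ^ 2 := by
    nlinarith [hD1, hD2, hs0, hL1, sq_nonneg (Δ ^ 2 / ‖g‖ ^ 2 - 1 / (4 * L1) * s),
      mul_le_mul hD2 hD1 (sq_nonneg s) (le_trans (sq_nonneg _) hD2)]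
  linarith [hkey, hfin]
end

section
/- Let f : ℝ^d → ℝ be differentiable, convex, L-smooth with L > 0, and (L0, L1)-smooth with L0 > 0, L1 > 0, and suppose f attains its minimum at x* with f* = f(x*). Let T ≥ 1 and let the sequence (x_t)_{t=0,...,T} be generated by gradient descent with Polyak stepsize: x_{t+1} = x_t − η_t ∇f(x_t) with η_t = (f(x_t) − f*)/‖∇f(x_t)‖² (where ∇f(x_t) ≠ 0 for all t < T). Then min_{0 ≤ t ≤ T−1} f(x_t) − f* ≤ 8 L0 ‖x_0 − x*‖² / T + 64 L L1² ‖x_0 − x*‖⁴ / T². -/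
open RealInnerProductSpace

variable {E : Type*} [NormedAddCommGroup E] [InnerProductSpace ℝ E] [CompleteSpace E]

lemma toDual_gradient_aux (f : E → ℝ) (x : E) :
    (InnerProductSpace.toDual ℝ E) (gradient f x) = fderiv ℝ f x :=
  (InnerProductSpace.toDual ℝ E).apply_symm_apply _

lemma fderiv_apply_eq_inner (f : E → ℝ) (x v : E) :
    fderiv ℝ f x v = ⟪gradient f x, v⟫ := by
  rw [← toDual_gradient_aux]; simp [InnerProductSpace.toDual_apply_apply]

/-- Mean value style quadratic bound. -/
lemma grad_mvt (f : E → ℝ) (hdiff : Differentiable ℝ f) (x y : E) (B : ℝ)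
    (hB : ∀ z ∈ segment ℝ x y, ‖gradient f z - gradient f x‖ ≤ B) :
    f y ≤ f x + ⟪gradient f x, y - x⟫ + B * ‖y - x‖ := by
  set g := gradient f x with hg
  set h : E → ℝ := fun z => f z - ⟪g, z⟫ with hh
  have hinner : ∀ z : E, HasFDerivAt (fun w : E => ⟪g, w⟫) (innerSL ℝ g) z :=
    fun z => (innerSL ℝ g).hasFDerivAt
  have hdh : ∀ z : E, HasFDerivAt h (fderiv ℝ f z - innerSL ℝ g) z :=
    fun z => ((hdiff z).hasFDerivAt).sub (hinner z)
  have hfd : ∀ z : E, fderiv ℝ h z = fderiv ℝ f z - innerSL ℝ g :=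
    fun z => (hdh z).fderiv
  have hnorm : ∀ z : E, ‖fderiv ℝ h z‖ = ‖gradient f z - g‖ := by
    intro z
    have h1 : innerSL ℝ g = (InnerProductSpace.toDual ℝ E) g := by
      ext w; simp [InnerProductSpace.toDual_apply_apply]
    rw [hfd z, ← toDual_gradient_aux, h1, ← map_sub]
    exact (InnerProductSpace.toDual ℝ E).norm_map _
  have key : ‖h y - h x‖ ≤ B * ‖y - x‖ := by
    apply Convex.norm_image_sub_le_of_norm_fderiv_le
      (fun z _ => ((hdh z).differentiableAt))
      (fun z hz => by rw [hnorm z]; exact hB z hz)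
      (convex_segment x y) (left_mem_segment ℝ x y) (right_mem_segment ℝ x y)
  have hxy : h y - h x = f y - f x - ⟪g, y - x⟫ := by
    simp only [hh, inner_sub_right]; ring
  rw [hxy] at key
  have := abs_le.mp (by rwa [Real.norm_eq_abs] at key)
  linarith [this.2]

/-- Convexity gradient inequality. -/
lemma conv_grad (f : E → ℝ) (hdiff : Differentiable ℝ f)
    (hconv : ConvexOn ℝ Set.univ f) (x y : E) :
    f x + ⟪gradient f x, y - x⟫ ≤ f y := by
  set c : ℝ → E := fun t => x + t • (y - x) with hc
  have hcurve : HasDerivAt c (y - x) 0 := by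
    have h1 : HasDerivAt (fun t : ℝ => t • (y - x)) ((1 : ℝ) • (y - x)) 0 :=
      (hasDerivAt_id 0).smul_const (y - x)
    have h2 := h1.const_add x; rw [one_smul] at h2; exact h2
  have hc0 : c 0 = x := by simp [hc]
  have hgd : HasDerivAt (f ∘ c) (⟪gradient f x, y - x⟫) 0 := by
    have hfx : HasFDerivAt f (fderiv ℝ f x) (c 0) := hc0 ▸ (hdiff x).hasFDerivAt
    have := hfx.comp_hasDerivAt 0 hcurve
    rwa [fderiv_apply_eq_inner] at this
  have hgc : ConvexOn ℝ Set.univ (f ∘ c) := by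
    have : ConvexOn ℝ ((AffineMap.lineMap x y : ℝ →ᵃ[ℝ] E) ⁻¹' Set.univ)
        (f ∘ (AffineMap.lineMap x y : ℝ →ᵃ[ℝ] E)) :=
      hconv.comp_affineMap _
    have heq : c = fun t : ℝ => (AffineMap.lineMap x y : ℝ →ᵃ[ℝ] E) t := by
      funext t; simp [hc, AffineMap.lineMap_apply]; module
    rw [heq]
    simpa using this
  have := hgc.le_slope_of_hasDerivAt (Set.mem_univ 0) (Set.mem_univ 1) zero_lt_one hgd
  rw [slope_def_field] at this
  have h0 : (f ∘ c) 0 = f x := by simp [hc]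
  have h1 : (f ∘ c) 1 = f y := by simp [hc]
  rw [h0, h1] at this
  simp at this
  rw [← fderiv_apply_eq_inner, map_sub]
  linarith

lemma seg_bound (x y : E) {z : E} (hz : z ∈ segment ℝ x y) : ‖z - x‖ ≤ ‖y - x‖ := by
  obtain ⟨a, b, ha, hb, hab, rfl⟩ := hz
  have : a • x + b • y - x = b • (y - x) := by
    have hx : a • x = x - b • x := by
      rw [show a = 1 - b by linarith, sub_smul, one_smul]
    rw [hx, smul_sub]; abel
  rw [this, norm_smul, Real.norm_eq_abs, abs_of_nonneg hb]
  nlinarith [norm_nonneg (y - x)]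

/-- L-smoothness lower bound on the gap. -/
lemma gap_ge_L (f : E → ℝ) (hdiff : Differentiable ℝ f) (L : ℝ) (hL : 0 < L)
    (hLsmooth : ∀ x y : E, ‖gradient f x - gradient f y‖ ≤ L * ‖x - y‖)
    (xstar : E) (hmin : ∀ y, f xstar ≤ f y) (x : E) :
    ‖gradient f x‖ ^ 2 ≤ 4 * L * (f x - f xstar) := by
  set g := gradient f x with hg
  set y := x - (1 / (2 * L)) • g with hy
  have hyx : y - x = -((1 / (2 * L)) • g) := by rw [hy]; abel
  have hnyx : ‖y - x‖ = (1 / (2 * L)) * ‖g‖ := by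
    rw [hyx, norm_neg, norm_smul, Real.norm_eq_abs, abs_of_pos (by positivity)]
  have hB : ∀ z ∈ segment ℝ x y, ‖gradient f z - gradient f x‖ ≤ L * ‖y - x‖ := by
    intro z hz
    exact (hLsmooth z x).trans (by nlinarith [seg_bound x y hz])
  have h1 := grad_mvt f hdiff x y _ hB
  have h2 := hmin y
  have hinner : ⟪g, y - x⟫ = -((1 / (2 * L)) * ‖g‖ ^ 2) := by
    rw [hyx, inner_neg_right, real_inner_smul_right, real_inner_self_eq_norm_sq]
  have hL' : L ≠ 0 := ne_of_gt hL
  rw [hinner, hnyx] at h1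
  have e : f x + -(1 / (2 * L) * ‖g‖ ^ 2) + L * (1 / (2 * L) * ‖g‖) * (1 / (2 * L) * ‖g‖)
      = f x - ‖g‖ ^ 2 / (4 * L) := by field_simp; ring
  rw [e] at h1
  have key : ‖g‖ ^ 2 / (4 * L) ≤ f x - f xstar := by linarith
  have h3 := (div_le_iff₀ (by positivity : (0:ℝ) < 4 * L)).mp key
  linarith [h3, (by ring : (f x - f xstar) * (4 * L) = 4 * L * (f x - f xstar))]

/-- (L0,L1)-smoothness lower bound on the gap. -/
lemma gap_ge_L0L1 (f : E → ℝ) (hdiff : Differentiable ℝ f) (L0 L1 : ℝ)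
    (hL0 : 0 < L0) (hL1 : 0 < L1)
    (hsmooth : ∀ x y : E, ‖x - y‖ ≤ 1 / L1 →
      ‖gradient f x - gradient f y‖ ≤ (L0 + L1 * ‖gradient f x‖) * ‖x - y‖)
    (xstar : E) (hmin : ∀ y, f xstar ≤ f y) (x : E) :
    ‖gradient f x‖ ^ 2 ≤ 4 * (L0 + L1 * ‖gradient f x‖) * (f x - f xstar) := by
  set g := gradient f x with hg
  set M := L0 + L1 * ‖g‖ with hM
  have hMpos : 0 < M := by positivity
  set y := x - (1 / (2 * M)) • g with hy
  have hyx : y - x = -((1 / (2 * M)) • g) := by rw [hy]; abel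
  have hnyx : ‖y - x‖ = (1 / (2 * M)) * ‖g‖ := by
    rw [hyx, norm_neg, norm_smul, Real.norm_eq_abs, abs_of_pos (by positivity)]
  have hsmall : ‖y - x‖ ≤ 1 / (2 * L1) := by
    rw [hnyx]
    rw [div_mul_eq_mul_div, div_le_div_iff₀ (by positivity) (by positivity)]
    nlinarith [norm_nonneg g]
  have hB : ∀ z ∈ segment ℝ x y, ‖gradient f z - gradient f x‖ ≤ M * ‖y - x‖ := by
    intro z hz
    have hzx : ‖x - z‖ ≤ 1 / L1 := by
      rw [norm_sub_rev]
      calc ‖z - x‖ ≤ ‖y - x‖ := seg_bound x y hz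
        _ ≤ 1 / (2 * L1) := hsmall
        _ ≤ 1 / L1 := by rw [div_le_div_iff₀ (by positivity) (by positivity)]; nlinarith
    have := hsmooth x z hzx
    rw [norm_sub_rev (gradient f x), norm_sub_rev x, ← hg, ← hM] at this
    refine this.trans ?_
    have := seg_bound x y hz
    nlinarith
  have h1 := grad_mvt f hdiff x y _ hB
  have h2 := hmin y
  have hinner : ⟪g, y - x⟫ = -((1 / (2 * M)) * ‖g‖ ^ 2) := by
    rw [hyx, inner_neg_right, real_inner_smul_right, real_inner_self_eq_norm_sq]
  have hM' : M ≠ 0 := ne_of_gt hMpos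
  rw [hinner, hnyx] at h1
  have e : f x + -(1 / (2 * M) * ‖g‖ ^ 2) + M * (1 / (2 * M) * ‖g‖) * (1 / (2 * M) * ‖g‖)
      = f x - ‖g‖ ^ 2 / (4 * M) := by field_simp; ring
  rw [e] at h1
  have key : ‖g‖ ^ 2 / (4 * M) ≤ f x - f xstar := by linarith
  have h3 := (div_le_iff₀ (by positivity : (0:ℝ) < 4 * M)).mp key
  linarith [h3, (by ring : (f x - f xstar) * (4 * M) = 4 * M * (f x - f xstar))]

lemma descent_step (f : E → ℝ) (hdiff : Differentiable ℝ f) (hconv : ConvexOn ℝ Set.univ f)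
    (xstar : E) (hmin : ∀ y, f xstar ≤ f y) (u : E) (hg : gradient f u ≠ 0) :
    ‖(u - ((f u - f xstar) / ‖gradient f u‖ ^ 2) • gradient f u) - xstar‖ ^ 2
      ≤ ‖u - xstar‖ ^ 2 - (f u - f xstar) ^ 2 / ‖gradient f u‖ ^ 2 := by
  set g := gradient f u with hgdef
  set s := f u - f xstar with hs
  set q := ‖g‖ ^ 2 with hq
  have hq0 : 0 < q := by
    rw [hq]; exact pow_pos (norm_pos_iff.mpr hg) 2
  set η := s / q with hη
  have hs0 : 0 ≤ s := by rw [hs]; linarith [hmin u]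
  have hη0 : 0 ≤ η := div_nonneg hs0 hq0.le
  have hci : s ≤ ⟪g, u - xstar⟫ := by
    have := conv_grad f hdiff hconv u xstar
    have he : ⟪g, xstar - u⟫ = -⟪g, u - xstar⟫ := by
      rw [show xstar - u = -(u - xstar) by abel, inner_neg_right]
    rw [he] at this
    linarith
  have hre : (u - η • g) - xstar = (u - xstar) - η • g := by abel
  rw [hre, norm_sub_sq_real]
  have h1 : ⟪u - xstar, η • g⟫ = η * ⟪g, u - xstar⟫ := by
    rw [real_inner_smul_right, real_inner_comm]
  have h2 : ‖η • g‖ ^ 2 = η ^ 2 * q := by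
    rw [norm_smul, mul_pow, Real.norm_eq_abs, sq_abs, hq]
  rw [h1, h2]
  have e1 : η ^ 2 * q = s ^ 2 / q := by rw [hη]; field_simp
  have e2 : η * s = s ^ 2 / q := by rw [hη]; field_simp
  have h3 : η * s ≤ η * ⟪g, u - xstar⟫ := mul_le_mul_of_nonneg_left hci hη0
  rw [e1]
  rw [e2] at h3
  linarith

lemma ineq_aux (Δ s q L0 L1 sL sΔ ss : ℝ) (hΔ0 : 0 ≤ Δ) (hΔs : Δ ≤ s)
    (hsΔ : sΔ ^ 2 = Δ) (hss : ss ^ 2 = s) (hsL0 : 0 ≤ sL) (hsΔ0 : 0 ≤ sΔ) (hss0 : 0 ≤ ss)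
    (hΔss : sΔ ≤ ss) (h2 : q ^ 2 ≤ 4 * (L0 + L1 * q) * s) (h4 : q ≤ 2 * sL * ss)
    (hL0 : 0 < L0) (hL1 : 0 < L1) :
    Δ * q ^ 2 ≤ 4 * (L0 + 2 * L1 * sL * sΔ) * s ^ 2 := by
  have hs0 : 0 ≤ s := hss ▸ sq_nonneg ss
  have f1 : Δ * q ^ 2 ≤ Δ * (4 * (L0 + L1 * q) * s) := mul_le_mul_of_nonneg_left h2 hΔ0
  have f3 : (4 * L1 * Δ * s) * q ≤ (4 * L1 * Δ * s) * (2 * sL * ss) :=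
    mul_le_mul_of_nonneg_left h4 (by positivity)
  have f4 : Δ * ss ≤ sΔ * s := by
    nlinarith [mul_nonneg (mul_nonneg (sub_nonneg.mpr hΔss) hsΔ0) hss0]
  have f6 : (8 * L1 * sL * s) * (Δ * ss) ≤ (8 * L1 * sL * s) * (sΔ * s) :=
    mul_le_mul_of_nonneg_left f4 (by positivity)
  have f7 : 4 * L0 * Δ * s ≤ 4 * L0 * s * s := by
    nlinarith [mul_nonneg (mul_nonneg hL0.le (sub_nonneg.mpr hΔs)) hs0]
  nlinarith [f1, f3, f6, f7]

lemma quad_resolve (Tr Δ L0 L1 L sL sΔ D2 : ℝ)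
    (h7 : Tr * (Tr * Δ) ≤ Tr * (4 * L0 * D2 + 8 * L1 * sL * sΔ * D2))
    (e1 : (Tr * sΔ) ^ 2 = Tr ^ 2 * Δ)
    (e2 : (8 * L1 * sL * D2) ^ 2 = 64 * L * L1 ^ 2 * D2 ^ 2) :
    Δ * Tr ^ 2 ≤ 8 * L0 * D2 * Tr + 64 * L * L1 ^ 2 * D2 ^ 2 := by
  nlinarith [sq_nonneg (Tr * sΔ - 8 * L1 * sL * D2)]

set_option maxHeartbeats 1000000 in
/-- Convergence of gradient descent with Polyak stepsize under convexity,
L-smoothness and (L0, L1)-smoothness: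
`min_{0≤t≤T−1} f(x_t) − f* ≤ 8L0‖x_0 − x*‖²/T + 64 L L1² ‖x_0 − x*‖⁴/T²`. -/
theorem polyak_stepsize_convergence_generalized_smooth {d : ℕ}
    (f : EuclideanSpace ℝ (Fin d) → ℝ) (L L0 L1 : ℝ)
    (hL : 0 < L) (hL0 : 0 < L0) (hL1 : 0 < L1)
    (hdiff : Differentiable ℝ f)
    (hconv : ConvexOn ℝ Set.univ f)
    (hLsmooth : ∀ x y : EuclideanSpace ℝ (Fin d),
      ‖gradient f x - gradient f y‖ ≤ L * ‖x - y‖)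
    (hsmooth : ∀ x y : EuclideanSpace ℝ (Fin d), ‖x - y‖ ≤ 1 / L1 →
      ‖gradient f x - gradient f y‖ ≤ (L0 + L1 * ‖gradient f x‖) * ‖x - y‖)
    (xstar : EuclideanSpace ℝ (Fin d)) (hmin : ∀ y, f xstar ≤ f y)
    (T : ℕ) (hT : 1 ≤ T)
    (x : ℕ → EuclideanSpace ℝ (Fin d))
    (hgrad : ∀ t < T, gradient f (x t) ≠ 0)
    (hstep : ∀ t < T, x (t + 1) =
      x t - ((f (x t) - f xstar) / ‖gradient f (x t)‖ ^ 2) • gradient f (x t)) :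
    (Finset.range T).inf' (Finset.nonempty_range_iff.mpr (by omega))
        (fun t => f (x t) - f xstar) ≤
      8 * L0 * ‖x 0 - xstar‖ ^ 2 / T +
        64 * L * L1 ^ 2 * ‖x 0 - xstar‖ ^ 4 / (T : ℝ) ^ 2 := by
  set Δ : ℝ := (Finset.range T).inf' (Finset.nonempty_range_iff.mpr (by omega))
      (fun t => f (x t) - f xstar) with hΔdef
  set D2 : ℝ := ‖x 0 - xstar‖ ^ 2 with hD2
  have hD20 : 0 ≤ D2 := by positivity
  -- telescoping
  have hub : ∀ n, n ≤ T →
      (∑ t ∈ Finset.range n, (f (x t) - f xstar) ^ 2 / ‖gradient f (x t)‖ ^ 2)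
        ≤ D2 - ‖x n - xstar‖ ^ 2 := by
    intro n hn
    induction n with
    | zero => simp [hD2]
    | succ m ih =>
      have hm : m < T := by omega
      have ih' := ih (by omega)
      have hd := descent_step f hdiff hconv xstar hmin (x m) (hgrad m hm)
      rw [← hstep m hm] at hd
      rw [Finset.sum_range_succ]
      linarith
  have hsum : (∑ t ∈ Finset.range T, (f (x t) - f xstar) ^ 2 / ‖gradient f (x t)‖ ^ 2)
      ≤ D2 := by
    have := hub T le_rfl
    nlinarith [sq_nonneg ‖x T - xstar‖]
  -- Δ basic facts
  have hΔle : ∀ t < T, Δ ≤ f (x t) - f xstar := by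
    intro t ht
    exact Finset.inf'_le _ (Finset.mem_range.mpr ht)
  have hΔ0 : 0 ≤ Δ := by
    obtain ⟨t, ht, hEq⟩ := Finset.exists_mem_eq_inf' (Finset.nonempty_range_iff.mpr
      (by omega : T ≠ 0)) (fun t => f (x t) - f xstar)
    rw [hΔdef, hEq]
    linarith [hmin (x t)]
  set sL := Real.sqrt L with hsL
  set sΔ := Real.sqrt Δ with hsΔ
  have hsL2 : sL ^ 2 = L := Real.sq_sqrt hL.le
  have hsΔ2 : sΔ ^ 2 = Δ := Real.sq_sqrt hΔ0
  set K : ℝ := L0 + 2 * L1 * sL * sΔ with hK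
  have hK0 : 0 < K := by
    have : 0 ≤ sL := Real.sqrt_nonneg L
    have : 0 ≤ sΔ := Real.sqrt_nonneg Δ
    rw [hK]; positivity
  -- per-step lower bound
  have claim : ∀ t < T, Δ / (4 * K) ≤ (f (x t) - f xstar) ^ 2 / ‖gradient f (x t)‖ ^ 2 := by
    intro t ht
    set s := f (x t) - f xstar with hs
    set q := ‖gradient f (x t)‖ with hq
    have hq0 : 0 < q := norm_pos_iff.mpr (hgrad t ht)
    have hs0 : 0 ≤ s := by rw [hs]; linarith [hmin (x t)]
    have hΔs : Δ ≤ s := hΔle t ht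
    set ss := Real.sqrt s with hss
    have hss2 : ss ^ 2 = s := Real.sq_sqrt hs0
    have h1 : q ^ 2 ≤ 4 * L * s := by
      have := gap_ge_L f hdiff L hL hLsmooth xstar hmin (x t)
      rw [← hq, ← hs] at this; exact this
    have h2 : q ^ 2 ≤ 4 * (L0 + L1 * q) * s := by
      have := gap_ge_L0L1 f hdiff L0 L1 hL0 hL1 hsmooth xstar hmin (x t)
      rw [← hq, ← hs] at this; exact this
    have h4 : q ≤ 2 * sL * ss := by
      have hrhs : 0 ≤ 2 * sL * ss := by positivity
      nlinarith [hsL2, hss2, h1, hq0.le, Real.sqrt_nonneg L, Real.sqrt_nonneg s]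
    have hΔss : sΔ ≤ ss := Real.sqrt_le_sqrt hΔs
    have key := ineq_aux Δ s q L0 L1 sL sΔ ss hΔ0 hΔs hsΔ2 hss2
      (Real.sqrt_nonneg L) (Real.sqrt_nonneg Δ) (Real.sqrt_nonneg s) hΔss h2 h4 hL0 hL1
    rw [div_le_div_iff₀ (by positivity) (by positivity)]
    calc Δ * q ^ 2 ≤ 4 * (L0 + 2 * L1 * sL * sΔ) * s ^ 2 := key
      _ = s ^ 2 * (4 * K) := by rw [hK]; ring
  -- sum the lower bound
  have hsumlb : (T : ℝ) * (Δ / (4 * K)) ≤ D2 := by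
    have h5 : (∑ _t ∈ Finset.range T, Δ / (4 * K))
        ≤ ∑ t ∈ Finset.range T, (f (x t) - f xstar) ^ 2 / ‖gradient f (x t)‖ ^ 2 :=
      Finset.sum_le_sum (fun t ht => claim t (Finset.mem_range.mp ht))
    rw [Finset.sum_const, Finset.card_range, nsmul_eq_mul] at h5
    linarith
  have hT0 : (0 : ℝ) < (T : ℝ) := by exact_mod_cast Nat.pos_of_ne_zero (by omega)
  -- T * Δ ≤ 4 K D2
  have hTΔ : (T : ℝ) * Δ ≤ 4 * L0 * D2 + 8 * L1 * sL * sΔ * D2 := by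
    have h6 : (T : ℝ) * Δ ≤ D2 * (4 * K) := by
      rw [← mul_div_assoc] at hsumlb
      have := (div_le_iff₀ (by positivity : (0:ℝ) < 4 * K)).mp hsumlb
      linarith
    rw [hK] at h6
    nlinarith
  -- quadratic resolution
  have hmain : Δ * (T : ℝ) ^ 2 ≤ 8 * L0 * D2 * T + 64 * L * L1 ^ 2 * D2 ^ 2 := by
    have h7 : (T : ℝ) * ((T : ℝ) * Δ) ≤ (T : ℝ) * (4 * L0 * D2 + 8 * L1 * sL * sΔ * D2) :=
      mul_le_mul_of_nonneg_left hTΔ hT0.le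
    have e1 : ((T : ℝ) * sΔ) ^ 2 = (T : ℝ) ^ 2 * Δ := by rw [mul_pow, hsΔ2]
    have e2 : (8 * L1 * sL * D2) ^ 2 = 64 * L * L1 ^ 2 * D2 ^ 2 := by
      have h8 : (8 * L1 * sL * D2) ^ 2 = 64 * L1 ^ 2 * sL ^ 2 * D2 ^ 2 := by ring
      rw [h8, hsL2]; ring
    exact quad_resolve (T : ℝ) Δ L0 L1 L sL sΔ D2 h7 e1 e2
  -- convert to the stated form
  have hpow : ‖x 0 - xstar‖ ^ 4 = D2 ^ 2 := by rw [hD2]; ring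
  rw [hpow]
  have hfe : 8 * L0 * D2 / (T : ℝ) + 64 * L * L1 ^ 2 * D2 ^ 2 / (T : ℝ) ^ 2
      = (8 * L0 * D2 * T + 64 * L * L1 ^ 2 * D2 ^ 2) / (T : ℝ) ^ 2 := by
    field_simp
  rw [hfe, le_div_iff₀ (by positivity)]
  linarith
end

section
/- Let f : ℝ^d → ℝ be differentiable and convex, and suppose f attains its minimum at x* with f* = f(x*). Let l* ≤ f* and σ² = f* − l*. Let T ≥ 1, let x_t ∈ ℝ^d with ∇f(x_t) ≠ 0, and let x_{t+1} = x_t − η_t ∇f(x_t) with η_t = (f(x_t) − l*)/(√T · ‖∇f(x_t)‖²). Then ‖x_{t+1} − x*‖² ≤ ‖x_t − x*‖² − η_t (f(x_t) − f*) + η_t σ² / √T. -/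
open Set InnerProductSpace

local notation "⟪" x ", " y "⟫" => @inner ℝ _ _ x y

lemma convex_gradient_inequality {d : ℕ}
    (f : EuclideanSpace ℝ (Fin d) → ℝ)
    (hdiff : Differentiable ℝ f)
    (hconv : ConvexOn ℝ Set.univ f)
    (x y : EuclideanSpace ℝ (Fin d)) :
    f x + ⟪gradient f x, y - x⟫ ≤ f y := by
  set g : ℝ → ℝ := fun t => f (AffineMap.lineMap x y t) with hg
  have hgconv : ConvexOn ℝ Set.univ g := by
    have := hconv.comp_affineMap (AffineMap.lineMap x y : ℝ →ᵃ[ℝ] EuclideanSpace ℝ (Fin d))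
    rw [Set.preimage_univ] at this
    exact this
  have hgrad : HasFDerivAt f (toDual ℝ _ (gradient f x)) x :=
    ((hdiff x).hasGradientAt).hasFDerivAt
  have hline : HasDerivAt (fun t : ℝ => AffineMap.lineMap x y t) (y - x) (0 : ℝ) := by
    have : HasDerivAt (fun t : ℝ => x + t • (y - x)) (y - x) (0 : ℝ) := by
      simpa using ((hasDerivAt_id (0:ℝ)).smul_const (y - x)).const_add x
    convert this using 2 with t
    simp [AffineMap.lineMap_apply]
    module
  have hgd : HasDerivAt g ⟪gradient f x, y - x⟫ 0 := by
    have := HasFDerivAt.comp_hasDerivAt (0 : ℝ) (by simpa [AffineMap.lineMap_apply] using hgrad) hline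
    simp [toDual_apply_apply] at this ⊢
    exact this
  have hslope := hgconv.le_slope_of_hasDerivAt (mem_univ (0:ℝ)) (mem_univ (1:ℝ))
    one_pos hgd
  have : slope g 0 1 = f y - f x := by
    simp [slope_def_field, hg, AffineMap.lineMap_apply]
  linarith [hslope.trans_eq this]

/-- One step of Inexact Polyak Stepsize satisfies
`‖x_{t+1} − x*‖² ≤ ‖x_t − x*‖² − η_t(f(x_t) − f*) + η_t σ²/√T` where `σ² = f* − l*`. -/
theorem inexact_polyak_one_step {d : ℕ}
    (f : EuclideanSpace ℝ (Fin d) → ℝ)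
    (hdiff : Differentiable ℝ f)
    (hconv : ConvexOn ℝ Set.univ f)
    (xstar : EuclideanSpace ℝ (Fin d)) (hmin : ∀ y, f xstar ≤ f y)
    (lstar : ℝ) (hlstar : lstar ≤ f xstar)
    (T : ℕ) (hT : 1 ≤ T)
    (xt xt1 : EuclideanSpace ℝ (Fin d))
    (hgrad : gradient f xt ≠ 0)
    (η : ℝ) (hη : η = (f xt - lstar) / (Real.sqrt T * ‖gradient f xt‖ ^ 2))
    (hstep : xt1 = xt - η • gradient f xt) :
    ‖xt1 - xstar‖ ^ 2 ≤ ‖xt - xstar‖ ^ 2 - η * (f xt - f xstar) +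
      η * (f xstar - lstar) / Real.sqrt T := by
  set g := gradient f xt with hgdef
  set s := Real.sqrt T with hsdef
  have hs1 : (1:ℝ) ≤ s := by
    rw [hsdef]
    have : (1:ℝ) ≤ (T:ℝ) := by exact_mod_cast hT
    simpa using Real.one_le_sqrt.mpr this
  have hs0 : 0 < s := lt_of_lt_of_le one_pos hs1
  have hG : 0 < ‖g‖ ^ 2 := pow_pos (norm_pos_iff.mpr hgrad) 2
  have hA : 0 ≤ f xt - f xstar := sub_nonneg.mpr (hmin xt)
  have hB : 0 ≤ f xstar - lstar := sub_nonneg.mpr hlstar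
  have hη0 : 0 ≤ η := by
    rw [hη]
    exact div_nonneg (by linarith) (by positivity)
  have heq : η * (s * ‖g‖ ^ 2) = f xt - lstar := by
    rw [hη]
    field_simp
  have hip : f xt - f xstar ≤ ⟪g, xt - xstar⟫ := by
    have := convex_gradient_inequality f hdiff hconv xt xstar
    have h2 : ⟪g, xstar - xt⟫ = -⟪g, xt - xstar⟫ := by
      rw [← inner_neg_right]; congr 1; abel
    rw [h2] at this
    linarith
  have hexp : ‖xt1 - xstar‖ ^ 2
      = ‖xt - xstar‖ ^ 2 - 2 * η * ⟪xt - xstar, g⟫ + η ^ 2 * ‖g‖ ^ 2 := by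
    have : xt1 - xstar = (xt - xstar) - η • g := by rw [hstep]; abel
    rw [this, @norm_sub_sq_real, real_inner_smul_right, norm_smul]
    simp [mul_pow]
    ring
  have hsym : ⟪xt - xstar, g⟫ = ⟪g, xt - xstar⟫ := real_inner_comm _ _
  rw [hexp, hsym]
  have hdiv : η * (f xstar - lstar) / s * s = η * (f xstar - lstar) := by
    field_simp
  nlinarith [mul_le_mul_of_nonneg_left hip hη0, mul_nonneg hη0 hA,
    mul_le_mul_of_nonneg_right (mul_le_mul_of_nonneg_left hip hη0) hs0.le,
    mul_nonneg (mul_nonneg hη0 hA) (sub_nonneg.mpr hs1)]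
end

section
/- Let f : ℝ^d → ℝ be twice continuously differentiable with ‖∇²f(x)‖ ≤ L0 + L1‖∇f(x)‖ for all x ∈ ℝ^d, where L0 > 0 and L1 > 0. Then for all x, y ∈ ℝ^d with ‖x − y‖ ≤ 1/L1, ‖∇f(x) − ∇f(y)‖ ≤ 2(L0 + L1‖∇f(x)‖)‖x − y‖. -/
/-- If `f` is C² and the Hessian satisfies
`‖∇²f(x)‖ ≤ L0 + L1‖∇f(x)‖` everywhere, then for all `x, y` with `‖x − y‖ ≤ 1/L1`,
`‖∇f(x) − ∇f(y)‖ ≤ 2(L0 + L1‖∇f(x)‖)‖x − y‖`. -/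
theorem hessian_bound_implies_generalized_smooth {d : ℕ}
    (f : EuclideanSpace ℝ (Fin d) → ℝ) (L0 L1 : ℝ)
    (hL0 : 0 < L0) (hL1 : 0 < L1)
    (hf : ContDiff ℝ 2 f)
    (hhess : ∀ x : EuclideanSpace ℝ (Fin d),
      ‖fderiv ℝ (gradient f) x‖ ≤ L0 + L1 * ‖gradient f x‖) :
    ∀ x y : EuclideanSpace ℝ (Fin d), ‖x - y‖ ≤ 1 / L1 →
      ‖gradient f x - gradient f y‖ ≤ 2 * (L0 + L1 * ‖gradient f x‖) * ‖x - y‖ := by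
  have hgrad : ContDiff ℝ 1 (gradient f) := by
    have h1 : ContDiff ℝ 1 (fderiv ℝ f) := hf.fderiv_right (by norm_num)
    exact (InnerProductSpace.toDual ℝ _).symm.contDiff.comp h1
  have hdiff : Differentiable ℝ (gradient f) := hgrad.differentiable one_ne_zero
  intro x y hxy
  by_cases hxy0 : x = y
  · subst hxy0
    simp [mul_nonneg, mul_nonneg (by positivity : (0:ℝ) ≤ 2 * (L0 + L1 * ‖gradient f x‖))]
  set v := y - x with hv
  have hr : ‖x - y‖ = ‖v‖ := by rw [hv, norm_sub_rev]
  set r := ‖v‖ with hrdef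
  have hrpos : 0 < r := by
    rw [hrdef, hv]
    simpa [sub_eq_zero] using fun h => hxy0 h.symm
  set g : ℝ → EuclideanSpace ℝ (Fin d) := fun t => gradient f (x + t • v) with hg
  have hg' : ∀ t : ℝ, HasDerivAt g ((fderiv ℝ (gradient f) (x + t • v)) v) t := by
    intro t
    have line : HasDerivAt (fun t : ℝ => x + t • v) v t := by
      simpa using ((hasDerivAt_id t).smul_const v).const_add x
    exact ((hdiff (x + t • v)).hasFDerivAt.comp_hasDerivAt t line)
  set h : ℝ → EuclideanSpace ℝ (Fin d) := fun t => g t - g 0 with hh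
  have hh' : ∀ t : ℝ, HasDerivAt h ((fderiv ℝ (gradient f) (x + t • v)) v) t :=
    fun t => (hg' t).sub_const (g 0)
  have hg0 : g 0 = gradient f x := by simp [hg]
  have hg1 : g 1 = gradient f y := by simp [hg, hv]
  set K := L1 * r with hK
  set ε := (L0 + L1 * ‖gradient f x‖) * r with hε
  have hKpos : 0 < K := by positivity
  have bound : ∀ t ∈ Set.Ico (0:ℝ) 1,
      ‖(fderiv ℝ (gradient f) (x + t • v)) v‖ ≤ K * ‖h t‖ + ε := by
    intro t _
    have h1 : ‖(fderiv ℝ (gradient f) (x + t • v)) v‖ ≤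
        (L0 + L1 * ‖g t‖) * r := by
      calc ‖(fderiv ℝ (gradient f) (x + t • v)) v‖
          ≤ ‖fderiv ℝ (gradient f) (x + t • v)‖ * ‖v‖ :=
            (fderiv ℝ (gradient f) (x + t • v)).le_opNorm v
        _ ≤ (L0 + L1 * ‖g t‖) * r := by
            apply mul_le_mul_of_nonneg_right (hhess _) (norm_nonneg _)
    have h2 : ‖g t‖ ≤ ‖h t‖ + ‖gradient f x‖ := by
      rw [← hg0]
      have := norm_le_norm_add_norm_sub' (g t) (g 0)
      simp only [hh]
      linarith [this]
    calc ‖(fderiv ℝ (gradient f) (x + t • v)) v‖ ≤ (L0 + L1 * ‖g t‖) * r := h1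
      _ ≤ (L0 + L1 * (‖h t‖ + ‖gradient f x‖)) * r := by
          apply mul_le_mul_of_nonneg_right _ hrpos.le
          nlinarith
      _ = K * ‖h t‖ + ε := by ring
  have gron := norm_le_gronwallBound_of_norm_deriv_right_le
    (f := h) (f' := fun t => (fderiv ℝ (gradient f) (x + t • v)) v)
    (δ := 0) (K := K) (ε := ε) (a := 0) (b := 1)
    (fun t _ => (hh' t).continuousAt.continuousWithinAt)
    (fun t _ => (hh' t).hasDerivWithinAt)
    (by simp [hh]) bound 1 (by norm_num)
  have hK1 : K ≤ 1 := by
    have h1 : r ≤ 1 / L1 := hr ▸ hxy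
    rw [hK]
    calc L1 * r ≤ L1 * (1 / L1) := mul_le_mul_of_nonneg_left h1 hL1.le
      _ = 1 := by field_simp
  have hexp : Real.exp K ≤ 1 - K + K * Real.exp 1 := by
    have := convexOn_exp.2 (Set.mem_univ (0:ℝ)) (Set.mem_univ (1:ℝ))
      (by linarith : (0:ℝ) ≤ 1 - K) hKpos.le (by ring)
    simpa [Real.exp_zero, smul_eq_mul] using this
  have he : Real.exp 1 < 3 := by
    have := Real.exp_one_lt_d9; linarith
  have hgb : gronwallBound 0 K ε (1 - 0) ≤ 2 * ε := by
    rw [gronwallBound_of_K_ne_0 hKpos.ne']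
    simp only [sub_zero, zero_mul, zero_add, mul_one]
    have hεnn : 0 ≤ ε := by positivity
    have h1 : Real.exp K - 1 ≤ K * (Real.exp 1 - 1) := by nlinarith
    have h2 : ε / K * (Real.exp K - 1) ≤ ε / K * (K * (Real.exp 1 - 1)) :=
      mul_le_mul_of_nonneg_left h1 (div_nonneg hεnn hKpos.le)
    calc ε / K * (Real.exp K - 1) ≤ ε / K * (K * (Real.exp 1 - 1)) := h2
      _ = ε / K * K * (Real.exp 1 - 1) := by ring
      _ = ε * (Real.exp 1 - 1) := by rw [div_mul_cancel₀ ε hKpos.ne']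
      _ ≤ 2 * ε := by nlinarith
  have hfinal : ‖h 1‖ ≤ 2 * ε := gron.trans hgb
  have hnorm : ‖gradient f x - gradient f y‖ = ‖h 1‖ := by
    rw [hh]
    simp only [hg0, hg1]
    exact (norm_sub_rev _ _)
  rw [hnorm, hr]
  calc ‖h 1‖ ≤ 2 * ε := hfinal
    _ = 2 * (L0 + L1 * ‖gradient f x‖) * ‖v‖ := by rw [hε]; ring
end

section
/- Let L0 > 0 and L1 > 0, and let f : ℝ → ℝ be defined by f(x) = (L0 L1²/72) x⁴ + (L0/4) x². Then for every x ∈ ℝ, |f''(x)| ≤ (L1/2)|f'(x)| + L0/2. -/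
/-- For `f(x) = (L0 L1²/72)x⁴ + (L0/4)x²`, we have
`|f''(x)| ≤ (L1/2)|f'(x)| + L0/2` for every real `x`. -/
theorem quartic_second_deriv_bound (L0 L1 : ℝ) (hL0 : 0 < L0) (hL1 : 0 < L1)
    (f : ℝ → ℝ) (hf : f = fun x => L0 * L1 ^ 2 / 72 * x ^ 4 + L0 / 4 * x ^ 2) :
    ∀ x : ℝ, |deriv (deriv f) x| ≤ L1 / 2 * |deriv f x| + L0 / 2 := by
  have hd1 : deriv f = fun x => L0 * L1 ^ 2 / 18 * x ^ 3 + L0 / 2 * x := by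
    funext x
    rw [hf]
    have h1 : HasDerivAt (fun x : ℝ => L0 * L1 ^ 2 / 72 * x ^ 4 + L0 / 4 * x ^ 2)
        (L0 * L1 ^ 2 / 18 * x ^ 3 + L0 / 2 * x) x := by
      have := ((hasDerivAt_pow 4 x).const_mul (L0 * L1 ^ 2 / 72)).add
        ((hasDerivAt_pow 2 x).const_mul (L0 / 4))
      refine this.congr_deriv ?_
      norm_num
      ring
    exact h1.deriv
  have hd2 : deriv (deriv f) = fun x => L0 * L1 ^ 2 / 6 * x ^ 2 + L0 / 2 := by
    funext x
    rw [hd1]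
    have h1 : HasDerivAt (fun x : ℝ => L0 * L1 ^ 2 / 18 * x ^ 3 + L0 / 2 * x)
        (L0 * L1 ^ 2 / 6 * x ^ 2 + L0 / 2) x := by
      have := ((hasDerivAt_pow 3 x).const_mul (L0 * L1 ^ 2 / 18)).add
        ((hasDerivAt_id x).const_mul (L0 / 2))
      refine this.congr_deriv ?_
      norm_num
      ring
    exact h1.deriv
  intro x
  rw [hd2, hd1]
  simp only
  have hx2 : (0:ℝ) ≤ x ^ 2 := sq_nonneg x
  have habs : |L0 * L1 ^ 2 / 6 * x ^ 2 + L0 / 2| = L0 * L1 ^ 2 / 6 * x ^ 2 + L0 / 2 := by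
    apply abs_of_nonneg
    positivity
  rw [habs]
  have key : |x| * (L0 * L1 ^ 2 / 18 * x ^ 2 + L0 / 2) ≤ |L0 * L1 ^ 2 / 18 * x ^ 3 + L0 / 2 * x| := by
    have : L0 * L1 ^ 2 / 18 * x ^ 3 + L0 / 2 * x = x * (L0 * L1 ^ 2 / 18 * x ^ 2 + L0 / 2) := by ring
    rw [this, abs_mul, abs_of_nonneg (by positivity : (0:ℝ) ≤ L0 * L1 ^ 2 / 18 * x ^ 2 + L0 / 2)]
  have habs2 : x ^ 2 = |x| ^ 2 := (sq_abs x).symm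
  have hxa : (0:ℝ) ≤ |x| := abs_nonneg x
  rw [habs2] at key ⊢
  nlinarith [key, mul_nonneg hL0.le (mul_nonneg hxa (sq_nonneg (L1 * |x| - 3))), mul_pos hL0 hL1]
end

section
/- Let L0 > 0 and L1 > 0, and let f : ℝ → ℝ be defined by f(x) = (L0 L1²/72) x⁴ + (L0/4) x². Then f is (L0, L1)-smooth: for all x, y ∈ ℝ with |x − y| ≤ 1/L1, |f'(x) − f'(y)| ≤ (L0 + L1|f'(x)|)|x − y|. -/
/-- The quartic `f(x) = (L0 L1²/72)x⁴ + (L0/4)x²` is (L0, L1)-smooth: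
for all `x, y` with `|x − y| ≤ 1/L1`, `|f'(x) − f'(y)| ≤ (L0 + L1|f'(x)|)|x − y|`. -/
theorem quartic_is_generalized_smooth (L0 L1 : ℝ) (hL0 : 0 < L0) (hL1 : 0 < L1)
    (f : ℝ → ℝ) (hf : f = fun x => L0 * L1 ^ 2 / 72 * x ^ 4 + L0 / 4 * x ^ 2) :
    ∀ x y : ℝ, |x - y| ≤ 1 / L1 →
      |deriv f x - deriv f y| ≤ (L0 + L1 * |deriv f x|) * |x - y| := by
  have hd : ∀ z : ℝ, deriv f z = L0 * L1 ^ 2 / 18 * z ^ 3 + L0 / 2 * z := by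
    intro z
    have h : HasDerivAt f (L0 * L1 ^ 2 / 18 * z ^ 3 + L0 / 2 * z) z := by
      rw [hf]
      have h1 := (hasDerivAt_pow 4 z).const_mul (L0 * L1 ^ 2 / 72)
      have h2 := (hasDerivAt_pow 2 z).const_mul (L0 / 4)
      have := h1.add h2
      refine this.congr_deriv ?_
      push_cast
      ring
    exact h.deriv
  intro x y hxy
  rw [hd x, hd y]
  have hq : 0 ≤ x ^ 2 + x * y + y ^ 2 := by
    nlinarith [sq_nonneg (x + y), sq_nonneg x, sq_nonneg y]
  have hC : 0 ≤ L0 * L1 ^ 2 / 18 * (x ^ 2 + x * y + y ^ 2) + L0 / 2 := by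
    have := mul_nonneg (by positivity : (0:ℝ) ≤ L0 * L1 ^ 2 / 18) hq
    linarith
  have hdiff : (L0 * L1 ^ 2 / 18 * x ^ 3 + L0 / 2 * x) - (L0 * L1 ^ 2 / 18 * y ^ 3 + L0 / 2 * y)
      = (x - y) * (L0 * L1 ^ 2 / 18 * (x ^ 2 + x * y + y ^ 2) + L0 / 2) := by ring
  rw [hdiff, abs_mul, abs_of_nonneg hC]
  have hpos : (0:ℝ) ≤ L0 * L1 ^ 2 / 18 * x ^ 2 + L0 / 2 := by positivity
  have hA : |L0 * L1 ^ 2 / 18 * x ^ 3 + L0 / 2 * x|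
      = |x| * (L0 * L1 ^ 2 / 18 * x ^ 2 + L0 / 2) := by
    rw [show L0 * L1 ^ 2 / 18 * x ^ 3 + L0 / 2 * x
        = x * (L0 * L1 ^ 2 / 18 * x ^ 2 + L0 / 2) by ring, abs_mul]
    congr 1
    exact abs_of_nonneg hpos
  rw [hA]
  set u := |x| with hu_def
  set s := |x - y| with hs_def
  have hs0 : (0:ℝ) ≤ s := abs_nonneg _
  have hu0 : (0:ℝ) ≤ u := abs_nonneg _
  have hsL : L1 * s ≤ 1 := by
    rw [mul_comm, ← le_div_iff₀ hL1]
    exact hxy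
  have hu : u ^ 2 = x ^ 2 := sq_abs x
  have hts : s ^ 2 = (x - y) ^ 2 := sq_abs _
  have hxt : -(x * (x - y)) ≤ u * s := by
    rw [hu_def, hs_def, ← abs_mul]; exact neg_le_abs _
  have h1 : x ^ 2 + x * y + y ^ 2 ≤ 3 * u ^ 2 + 3 * (u * s) + s ^ 2 := by
    nlinarith [hxt, hu, hts]
  have e1 : 0 ≤ L0 * (L1 * u * (1 - L1 * s)) :=
    mul_nonneg hL0.le (mul_nonneg (mul_nonneg hL1.le hu0) (by linarith))
  have e2 : 0 ≤ L0 * ((1 - L1 * s) * (1 + L1 * s)) :=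
    mul_nonneg hL0.le (mul_nonneg (by linarith)
      (by positivity))
  have e3 : 0 ≤ L0 * (L1 * u * (L1 * u - 2) ^ 2) :=
    mul_nonneg hL0.le (mul_nonneg (mul_nonneg hL1.le hu0) (sq_nonneg _))
  have e4 : 0 ≤ L0 * (L1 * u) ^ 2 := by positivity
  have e5 : 0 ≤ L0 * (L1 * u) := by positivity
  have key : L0 * L1 ^ 2 / 18 * (x ^ 2 + x * y + y ^ 2) + L0 / 2
      ≤ L0 + L1 * (u * (L0 * L1 ^ 2 / 18 * x ^ 2 + L0 / 2)) := by
    have step : L0 * L1 ^ 2 / 18 * (x ^ 2 + x * y + y ^ 2)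
        ≤ L0 * L1 ^ 2 / 18 * (3 * u ^ 2 + 3 * (u * s) + s ^ 2) :=
      mul_le_mul_of_nonneg_left h1 (by positivity)
    have hR : L1 * (u * (L0 * L1 ^ 2 / 18 * x ^ 2 + L0 / 2))
        = L1 * (u * (L0 * L1 ^ 2 / 18 * u ^ 2 + L0 / 2)) := by rw [hu]
    rw [hR]
    have key2 : L0 * L1 ^ 2 / 18 * (3 * u ^ 2 + 3 * (u * s) + s ^ 2) + L0 / 2
        ≤ L0 + L1 * (u * (L0 * L1 ^ 2 / 18 * u ^ 2 + L0 / 2)) := by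
      nlinarith [e1, e2, e3, e4, e5, hL0]
    linarith [step, key2]
  calc s * (L0 * L1 ^ 2 / 18 * (x ^ 2 + x * y + y ^ 2) + L0 / 2)
      ≤ s * (L0 + L1 * (u * (L0 * L1 ^ 2 / 18 * x ^ 2 + L0 / 2))) :=
        mul_le_mul_of_nonneg_left key hs0
    _ = (L0 + L1 * (u * (L0 * L1 ^ 2 / 18 * x ^ 2 + L0 / 2))) * s := mul_comm _ _
end
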